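/- Let a ∈ 𝕋_min^{d+1} with supp(a) = {0} ⊔ J for J nonempty. The min-tropical halfspace S = {x ∈ 𝕋_min^{d+1} : x₀ + a₀ ≤ min(x_j + a_j : j ∈ J)} is generated (as a min-tropical cone) by the d+1 points g⁽⁰⁾,…,g⁽ᵈ⁾, where g⁽⁰⁾ = e⁽⁰⁾ (the 0-th tropical unit vector), g⁽ⁱ⁾ for i ∈ J has 0-th coordinate 0, i-th coordinate a₀ − a_i, and ∞ elsewhere, and g⁽ⁱ⁾ = e⁽ⁱ⁾ for i ∉ J ∪ {0}. -/

import Mathlib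

def IsMinTropCone {d : ℕ} (C : Set (Fin (d + 1) → WithTop ℝ)) : Prop :=
  C.Nonempty ∧ ∀ (lam mu : WithTop ℝ), ∀ x ∈ C, ∀ y ∈ C,
    (fun k => min (lam + x k) (mu + y k)) ∈ C

def IsSmallestMinTropConeContaining {d : ℕ} (C G : Set (Fin (d + 1) → WithTop ℝ)) : Prop :=
  IsMinTropCone C ∧ G ⊆ C ∧ ∀ D, IsMinTropCone D → G ⊆ D → C ⊆ D

lemma combo_mem {d : ℕ} {D : Set (Fin (d+1) → WithTop ℝ)} (hD : IsMinTropCone D)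
    {ι : Type} {s : Finset ι} (hs : s.Nonempty) (lam : ι → WithTop ℝ)
    (p : ι → Fin (d+1) → WithTop ℝ) (hp : ∀ i ∈ s, p i ∈ D) :
    (fun k => s.inf' hs (fun i => lam i + p i k)) ∈ D := by
  induction hs using Finset.Nonempty.cons_induction with
  | singleton a =>
    have := hD.2 (lam a) (lam a) (p a) (hp a (by simp)) (p a) (hp a (by simp))
    simpa [min_self] using this
  | cons a s h hs ih =>
    have hprev := ih (fun i hi => hp i (by simp [hi]))
    have := hD.2 (lam a) 0 (p a) (hp a (by simp)) _ hprev
    simpa [Finset.inf'_cons hs, zero_add] using this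

/-- The min-tropical halfspace `{x : x₀ + a₀ ≤ min (x_j + a_j : j ∈ J)}`, where
`supp a = {0} ⊔ J`, is generated as a min-tropical cone by the `d+1` points
`g⁽⁰⁾, …, g⁽ᵈ⁾`: `g⁽ⁱ⁾` for `i ∈ J` has 0-th coordinate `0`, `i`-th coordinate
`a₀ - a_i` and `∞` elsewhere, while `g⁽ⁱ⁾ = e⁽ⁱ⁾` (the `i`-th tropical unit vector)
for `i ∉ J`. -/
theorem minTropHalfspace_generators {d : ℕ} (a : Fin (d + 1) → WithTop ℝ)
    (J : Finset (Fin (d + 1))) (hJ : J.Nonempty) (h0J : (0 : Fin (d + 1)) ∉ J)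
    (hsupp : ∀ i, a i ≠ ⊤ ↔ (i = 0 ∨ i ∈ J)) :
    IsSmallestMinTropConeContaining
      {x : Fin (d + 1) → WithTop ℝ | x 0 + a 0 ≤ J.inf' hJ (fun j => x j + a j)}
      (Set.range (fun i : Fin (d + 1) =>
        if i ∈ J then
          (fun k => if k = 0 then (0 : WithTop ℝ)
                    else if k = i then ((WithTop.untopD 0 (a 0) - WithTop.untopD 0 (a i) : ℝ) : WithTop ℝ)
                    else ⊤)
        else (fun k => if k = i then (0 : WithTop ℝ) else ⊤))) := by
  obtain ⟨u, hu⟩ : ∃ u : Fin (d + 1) → ℝ, ∀ i, WithTop.untopD 0 (a i) = u i := ⟨_, fun _ => rfl⟩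
  simp only [hu]
  set g : Fin (d + 1) → Fin (d + 1) → WithTop ℝ := fun i =>
        if i ∈ J then
          (fun k => if k = 0 then (0 : WithTop ℝ)
                    else if k = i then ((u 0 - u i : ℝ) : WithTop ℝ)
                    else ⊤)
        else (fun k => if k = i then (0 : WithTop ℝ) else ⊤) with hg
  have ha0 : a 0 = ((u 0 : ℝ) : WithTop ℝ) := by
    rcases WithTop.ne_top_iff_exists.mp ((hsupp 0).mpr (Or.inl rfl)) with ⟨r, hr⟩
    rw [← hr, ← hu 0, ← hr]; simp
  have haJ : ∀ j ∈ J, a j = ((u j : ℝ) : WithTop ℝ) := by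
    intro j hj
    rcases WithTop.ne_top_iff_exists.mp ((hsupp j).mpr (Or.inr hj)) with ⟨r, hr⟩
    rw [← hr, ← hu j, ← hr]; simp
  have hJ0 : ∀ j ∈ J, j ≠ 0 := fun j hj h => h0J (h ▸ hj)
  have hgJ : ∀ i ∈ J, ∀ k, g i k =
      if k = 0 then (0 : WithTop ℝ) else if k = i then ((u 0 - u i : ℝ) : WithTop ℝ) else ⊤ := by
    intro i hi k; simp only [hg, if_pos hi]
  have hgN : ∀ i ∉ J, ∀ k, g i k = if k = i then (0 : WithTop ℝ) else ⊤ := by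
    intro i hi k; simp only [hg, if_neg hi]
  refine ⟨⟨⟨fun _ => ⊤, ?_⟩, ?_⟩, ?_, ?_⟩
  · -- constant ⊤ in halfspace
    simp only [Set.mem_setOf_eq, top_add]
    exact le_top.trans (by simp [Finset.le_inf'_iff, top_add])
  · -- closed under tropical combinations
    rintro lam mu x hx y hy
    simp only [Set.mem_setOf_eq] at hx hy ⊢
    refine Finset.le_inf'_iff .. |>.mpr fun j hj => ?_
    have hx' : lam + (x 0 + a 0) ≤ lam + (x j + a j) :=
      add_le_add_right (hx.trans (Finset.inf'_le _ hj)) _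
    have hy' : mu + (y 0 + a 0) ≤ mu + (y j + a j) :=
      add_le_add_right (hy.trans (Finset.inf'_le _ hj)) _
    calc min (lam + x 0) (mu + y 0) + a 0
        = min (lam + x 0 + a 0) (mu + y 0 + a 0) := by
          rcases min_cases (lam + x 0) (mu + y 0) with ⟨h1, h2⟩ | ⟨h1, h2⟩ <;>
            rw [h1] <;> [exact (min_eq_left (add_le_add_left h2 _)).symm;
              exact (min_eq_right (add_le_add_left h2.le _)).symm]
      _ ≤ min (lam + x j + a j) (mu + y j + a j) := by
          refine min_le_min ?_ ?_ <;> rw [add_assoc, add_assoc] <;> [exact hx'; exact hy']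
      _ = min (lam + x j) (mu + y j) + a j := by
          rcases min_cases (lam + x j) (mu + y j) with ⟨h1, h2⟩ | ⟨h1, h2⟩ <;>
            rw [h1] <;> [exact min_eq_left (add_le_add_left h2 _);
              exact min_eq_right (add_le_add_left h2.le _)]
  · -- generators lie in the halfspace
    rintro p ⟨i, rfl⟩
    simp only [Set.mem_setOf_eq]
    by_cases hiJ : i ∈ J
    · rw [hgJ i hiJ 0, if_pos rfl, zero_add]
      refine Finset.le_inf'_iff .. |>.mpr fun j hj => ?_
      rw [hgJ i hiJ j, if_neg (hJ0 j hj)]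
      by_cases hji : j = i
      · subst hji
        rw [if_pos rfl, haJ j hj, ← WithTop.coe_add, sub_add_cancel, ha0]
      · rw [if_neg hji, top_add]; exact le_top
    · by_cases hi0 : i = 0
      · subst hi0
        rw [hgN 0 hiJ 0, if_pos rfl, zero_add]
        refine Finset.le_inf'_iff .. |>.mpr fun j hj => ?_
        rw [hgN 0 hiJ j, if_neg (hJ0 j hj), top_add]
        exact le_top
      · rw [hgN i hiJ 0, if_neg (Ne.symm hi0), top_add]
        refine Finset.le_inf'_iff .. |>.mpr fun j hj => ?_
        rw [hgN i hiJ j, if_neg (fun h : j = i => hiJ (h ▸ hj)), top_add]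
  · -- minimality
    intro D hD hGD x hx
    simp only [Set.mem_setOf_eq] at hx
    set lam : Fin (d + 1) → WithTop ℝ := fun i =>
      if i ∈ J then x i + ((u i - u 0 : ℝ) : WithTop ℝ) else x i with hlam
    have hlamJ : ∀ i ∈ J, lam i = x i + ((u i - u 0 : ℝ) : WithTop ℝ) := by
      intro i hi; simp only [hlam, if_pos hi]
    have hlamN : ∀ i ∉ J, lam i = x i := by
      intro i hi; simp only [hlam, if_neg hi]
    have key : x = fun k => Finset.univ.inf' Finset.univ_nonempty (fun i => lam i + g i k) := by
      funext k
      refine le_antisymm ?_ ?_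
      · refine Finset.le_inf'_iff .. |>.mpr fun i _ => ?_
        by_cases hiJ : i ∈ J
        · rw [hlamJ i hiJ, hgJ i hiJ k]
          by_cases hk0 : k = 0
          · subst hk0
            rw [if_pos rfl, add_zero]
            have h1 : x 0 + a 0 ≤ x i + a i := hx.trans (Finset.inf'_le _ hiJ)
            calc x 0 = x 0 + a 0 + ((-u 0 : ℝ) : WithTop ℝ) := by
                  rw [ha0, add_assoc, ← WithTop.coe_add, add_neg_cancel, WithTop.coe_zero,
                    add_zero]
              _ ≤ x i + a i + ((-u 0 : ℝ) : WithTop ℝ) := add_le_add_left h1 _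
              _ = x i + ((u i - u 0 : ℝ) : WithTop ℝ) := by
                  rw [haJ i hiJ, add_assoc, ← WithTop.coe_add, ← sub_eq_add_neg]
          · rw [if_neg hk0]
            by_cases hki : k = i
            · rw [if_pos hki, add_assoc, ← WithTop.coe_add, sub_add_sub_cancel, sub_self,
                WithTop.coe_zero, add_zero, hki]
            · rw [if_neg hki, add_top]; exact le_top
        · rw [hlamN i hiJ, hgN i hiJ k]
          by_cases hki : k = i
          · rw [if_pos hki, add_zero, hki]
          · rw [if_neg hki, add_top]; exact le_top
      · refine (Finset.inf'_le _ (Finset.mem_univ k)).trans ?_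
        show lam k + g k k ≤ x k
        by_cases hkJ : k ∈ J
        · rw [hlamJ k hkJ, hgJ k hkJ k, if_neg (hJ0 k hkJ), if_pos rfl, add_assoc,
            ← WithTop.coe_add, sub_add_sub_cancel, sub_self, WithTop.coe_zero, add_zero]
        · rw [hlamN k hkJ, hgN k hkJ k, if_pos rfl, add_zero]
    rw [key]
    exact combo_mem hD Finset.univ_nonempty lam g (fun i _ => hGD ⟨i, rfl⟩)
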